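/- Fix an integer n ≥ 1, let R = 𝔽_q[t]/(t^{n−1}) and let τ ∈ R be the image of t, so that 1+τa is a unit of R for every a ∈ R. For any fixed c, d ∈ R, the map R → R × R sending a to ((1+τa)⁻¹·c, (1+τa)⁻¹·(d−a)) is injective; in particular its image, the orbit of (c,d) under the diamond action of the group 1+tA/tⁿA, has exactly q^{n−1} elements. -/

import Mathlib

open Polynomial

lemma stmt14_aux {R : Type*} [CommRing R] (τ c d : R) (hnil : IsNilpotent τ) :
    (∀ a : R, IsUnit (1 + τ * a)) ∧
    Function.Injective (fun a : R =>
      (Ring.inverse (1 + τ * a) * c, Ring.inverse (1 + τ * a) * (d - a))) := by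
  have hunit : ∀ a : R, IsUnit (1 + τ * a) := fun a =>
    IsNilpotent.isUnit_one_add ((Commute.all τ a).isNilpotent_mul_right hnil)
  refine ⟨hunit, ?_⟩
  intro a b hab
  simp only [Prod.mk.injEq] at hab
  obtain ⟨-, h2⟩ := hab
  obtain ⟨u, hu⟩ := hunit a
  obtain ⟨v, hv⟩ := hunit b
  rw [← hu, ← hv, Ring.inverse_unit, Ring.inverse_unit] at h2
  have key : (v : R) * (d - a) = (u : R) * (d - b) := by
    calc (v : R) * (d - a)
        = ((u : R) * ↑u⁻¹) * ↑v * (d - a) := by rw [Units.mul_inv, one_mul]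
      _ = (u : R) * ↑v * ((↑u⁻¹ : R) * (d - a)) := by ring
      _ = (u : R) * ↑v * ((↑v⁻¹ : R) * (d - b)) := by rw [h2]
      _ = ((v : R) * ↑v⁻¹) * (↑u * (d - b)) := by ring
      _ = (u : R) * (d - b) := by rw [Units.mul_inv, one_mul]
  rw [hu, hv] at key
  have hz : (a - b) * (1 + τ * d) = 0 := by linear_combination -key
  obtain ⟨w, hw⟩ := hunit d
  rw [← hw] at hz
  exact sub_eq_zero.mp ((Units.mul_left_eq_zero w).mp hz)

theorem stmt14 (p : ℕ) (hp : p.Prime) (F : Type*) [Field F] [Fintype F] [CharP F p]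
    (n : ℕ) (hn : 1 ≤ n)
    (c d : Polynomial F ⧸ Ideal.span {(X : Polynomial F) ^ (n - 1)}) :
    (∀ a : Polynomial F ⧸ Ideal.span {(X : Polynomial F) ^ (n - 1)},
      IsUnit (1 + Ideal.Quotient.mk (Ideal.span {(X : Polynomial F) ^ (n - 1)}) X * a)) ∧
    Function.Injective
      (fun a : Polynomial F ⧸ Ideal.span {(X : Polynomial F) ^ (n - 1)} =>
        (Ring.inverse (1 + Ideal.Quotient.mk (Ideal.span {(X : Polynomial F) ^ (n - 1)}) X * a)
            * c,
         Ring.inverse (1 + Ideal.Quotient.mk (Ideal.span {(X : Polynomial F) ^ (n - 1)}) X * a)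
            * (d - a))) ∧
    (Set.range
      (fun a : Polynomial F ⧸ Ideal.span {(X : Polynomial F) ^ (n - 1)} =>
        (Ring.inverse (1 + Ideal.Quotient.mk (Ideal.span {(X : Polynomial F) ^ (n - 1)}) X * a)
            * c,
         Ring.inverse (1 + Ideal.Quotient.mk (Ideal.span {(X : Polynomial F) ^ (n - 1)}) X * a)
            * (d - a)))).ncard = (Fintype.card F) ^ (n - 1) := by
  have hτ : (Ideal.Quotient.mk (Ideal.span {(X : Polynomial F) ^ (n - 1)}) X) ^ (n - 1) = 0 := by
    rw [← map_pow]
    exact Ideal.Quotient.eq_zero_iff_mem.mpr (Ideal.subset_span rfl)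
  obtain ⟨hunit, hinj⟩ := stmt14_aux _ c d ⟨n - 1, hτ⟩
  refine ⟨hunit, hinj, ?_⟩
  rw [← Nat.card_coe_set_eq, Nat.card_range_of_injective hinj]
  have hf : (X : Polynomial F) ^ (n - 1) ≠ 0 := pow_ne_zero _ X_ne_zero
  let pb : PowerBasis F (AdjoinRoot ((X : Polynomial F) ^ (n - 1))) := AdjoinRoot.powerBasis hf
  have hdim : pb.dim = n - 1 := by
    simp [pb, AdjoinRoot.powerBasis, natDegree_X_pow]
  calc Nat.card (Polynomial F ⧸ Ideal.span {(X : Polynomial F) ^ (n - 1)})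
      = Nat.card (Fin pb.dim → F) := Nat.card_congr pb.basis.equivFun.toEquiv
    _ = Fintype.card F ^ (n - 1) := by
        rw [Nat.card_eq_fintype_card, Fintype.card_fun, Fintype.card_fin, hdim]
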